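/- arXiv:1109.0668 — 2 statements merged into one kernel-verified Lean document; each statement's English description precedes it below -/
import Mathlib

section
/- (Local-global formula for Betti numbers.) Let A be a finite affine hyperplane arrangement in an ℓ-dimensional affine space over a field K. Then for every k, b_k(A) = Σ_{X ∈ L_k(A)} b_k(A_X), where the sum is over all rank-k flats X of A and A_X = {H ∈ A : H ⊇ X}. -/
/- Common definitions: hyperplane arrangements, intersection lattices, Möbius
functions, Betti numbers, characteristic polynomials, deconing, Ziegler
restriction, and freeness of (multi)arrangements. -/

open Module

noncomputable section
namespace ArrPaper

open scoped Classical

/-- The Möbius function of a finite poset `L` (the intersection lattice of an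
arrangement, ordered by *reverse inclusion*): elements with no strict upper bound in
the ambient order (i.e. the bottom `V` of the reverse-inclusion order) get value `1`,
and `μ(X) = -∑_{Y > X} μ(Y)` otherwise, so that `∑_{Y ≤ X} μ(Y) = 0` for `X > V`. -/
def posetMobius {α : Type*} [PartialOrder α] (L : Finset α) (x : α) : ℤ :=
  if (L.filter (fun y => x < y)).Nonempty then
    - ∑ y ∈ (L.filter (fun y => x < y)).attach, posetMobius L y.1
  else 1
termination_by (L.filter (fun y => x < y)).card
decreasing_by
  have hy := y.2
  simp only [Finset.mem_filter] at hy
  apply Finset.card_lt_card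
  constructor
  · intro z hz
    simp only [Finset.mem_filter] at hz ⊢
    exact ⟨hz.1, lt_trans hy.2 hz.2⟩
  · intro hsub
    have := hsub (Finset.mem_filter.2 ⟨hy.1, hy.2⟩)
    simp only [Finset.mem_filter] at this
    exact lt_irrefl _ this.2

variable {K V : Type*} [Field K] [AddCommGroup V] [Module K V]

/-- `H` is a linear hyperplane: the kernel of a nonzero linear form. -/
def IsLinHyp (H : Submodule K V) : Prop :=
  ∃ φ : V →ₗ[K] K, φ ≠ 0 ∧ LinearMap.ker φ = H

/-- The intersection lattice (as a `Finset`) of a finite collection `B` of linear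
subspaces, inside the ambient subspace `E`: all intersections of subfamilies of `B`
with `E` (the empty intersection giving `E` itself). -/
def LFinsetIn (E : Submodule K V) (B : Finset (Submodule K V)) : Finset (Submodule K V) :=
  B.powerset.image (fun s => (s.inf id) ⊓ E)

/-- The `k`-th Betti number of a central arrangement `B` with ambient space `E`:
`(-1)^k` times the sum of the Möbius values over the codimension-`k` elements of the
intersection lattice. -/
def cBetti (E : Submodule K V) (B : Finset (Submodule K V)) (k : ℕ) : ℤ :=
  (-1 : ℤ) ^ k *
    ∑ X ∈ (LFinsetIn E B).filter
        (fun X : Submodule K V => finrank K ↥E - finrank K ↥X = k),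
      posetMobius (LFinsetIn E B) X

/-- The characteristic polynomial `χ(B,t) = ∑_{X ∈ L(B)} μ(X) t^{dim X}` of a central
arrangement `B` in the ambient space `V`. -/
def cCharPoly (B : Finset (Submodule K V)) : Polynomial ℤ :=
  ∑ X ∈ LFinsetIn (⊤ : Submodule K V) B,
    Polynomial.C (posetMobius (LFinsetIn (⊤ : Submodule K V) B) X) *
      Polynomial.X ^ (finrank K ↥X)

/-- `H` is an affine hyperplane: nonempty, with hyperplane direction. -/
def IsAffHyp (H : AffineSubspace K V) : Prop :=
  (H : Set V).Nonempty ∧ IsLinHyp H.direction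

/-- The intersection poset (as a `Finset`) of a finite collection `B` of affine
subspaces, inside an ambient affine subspace `E`: all *nonempty* intersections of
subfamilies of `B` with `E` (the empty intersection giving `E`). -/
def aLFinset (E : AffineSubspace K V) (B : Finset (AffineSubspace K V)) :
    Finset (AffineSubspace K V) :=
  (B.powerset.image (fun s => (s.inf id) ⊓ E)).filter (fun X => (X : Set V).Nonempty)

/-- The `k`-th Betti number of an affine arrangement `B` with ambient affine space `E`. -/
def aBetti (E : AffineSubspace K V) (B : Finset (AffineSubspace K V)) (k : ℕ) : ℤ :=
  (-1 : ℤ) ^ k *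
    ∑ X ∈ (aLFinset E B).filter
        (fun X => finrank K E.direction - finrank K X.direction = k),
      posetMobius (aLFinset E B) X

/-- The affine hyperplane `{v | φ v = 1}`. -/
def levelOne (φ : V →ₗ[K] K) : AffineSubspace K V where
  carrier := {v | φ v = 1}
  smul_vsub_vadd_mem' := by
    intro c p1 p2 p3 h1 h2 h3
    simp only [Set.mem_setOf_eq] at *
    simp [vsub_eq_sub, vadd_eq_add, map_add, map_smul, map_sub, h1, h2, h3]

/-- The deconing `d_{H0}A`: the affine arrangement `{H ∩ {φ = 1} : H ∈ A \ {H0}}` in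
the affine hyperplane `H0' = {φ = 1}`, where `H0 = ker φ`. -/
def deconing (A : Finset (Submodule K V)) (H0 : Submodule K V) (φ : V →ₗ[K] K) :
    Finset (AffineSubspace K V) :=
  (A.erase H0).image (fun H => H.toAffineSubspace ⊓ levelOne φ)

/-- The underlying simple arrangement `A^{H0} = {H ∩ H0 : H ∈ A, H ≠ H0}` of the
Ziegler restriction: a collection of hyperplanes of `H0`. -/
def zieglerArr (A : Finset (Submodule K V)) (H0 : Submodule K V) :
    Finset (Submodule K V) :=
  (A.erase H0).image (fun H => H ⊓ H0)

/-- The Ziegler multiplicity `m^{H0}(X) = #{H ∈ A \ {H0} : H ∩ H0 = X}`. -/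
def zieglerMult (A : Finset (Submodule K V)) (H0 : Submodule K V)
    (X : Submodule K V) : ℕ :=
  ((A.erase H0).filter (fun H => H ⊓ H0 = X)).card

/-- The localization `A_X = {H ∈ A : H ⊇ X}`. -/
def locArr (A : Finset (Submodule K V)) (X : Submodule K V) :
    Finset (Submodule K V) :=
  A.filter (fun H => X ≤ H)

/-- The map `ρ : L(d_{H0}A) → L(A^{H0})`, sending an affine flat `X` to `KX ∩ H0`,
where `KX` is the linear span of `X`. -/
def rhoMap (H0 : Submodule K V) (X : AffineSubspace K V) : Submodule K V :=
  Submodule.span K (X : Set V) ⊓ H0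

/-- The rank-`k` (codimension computed inside `H0`) part of the intersection lattice
of the Ziegler restriction `A^{H0}`. -/
def restL (A : Finset (Submodule K V)) (H0 : Submodule K V) (k : ℕ) :
    Finset (Submodule K V) :=
  (LFinsetIn H0 (zieglerArr A H0)).filter
    (fun X : Submodule K V => finrank K ↥H0 - finrank K ↥X = k)

/-- The linear form `φ` on `K^n` as a degree-one polynomial `∑ φ(e_i)·x_i`. -/
def formPoly {n : ℕ} (φ : (Fin n → K) →ₗ[K] K) : MvPolynomial (Fin n) K :=
  ∑ i, MvPolynomial.C (φ (Pi.single i 1)) * MvPolynomial.X i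

/-- The module `D(B,m)` of logarithmic derivations of a multiarrangement in `K^n`:
derivations `θ` of `S = K[x_1,…,x_n]` such that `θ(α_H) ∈ (α_H^{m(H)})` for every
`H ∈ B` (for every defining linear form `α_H` of `H`). -/
def arrDeriv {n : ℕ} (B : Finset (Submodule K (Fin n → K)))
    (m : Submodule K (Fin n → K) → ℕ) :
    Submodule (MvPolynomial (Fin n) K)
      (Derivation K (MvPolynomial (Fin n) K) (MvPolynomial (Fin n) K)) where
  carrier := {θ | ∀ H ∈ B, ∀ φ : (Fin n → K) →ₗ[K] K, φ ≠ 0 → LinearMap.ker φ = H →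
    θ (formPoly φ) ∈ Ideal.span {formPoly φ ^ m H}}
  add_mem' := by
    intro a b ha hb H hH φ h0 hker
    simpa using add_mem (ha H hH φ h0 hker) (hb H hH φ h0 hker)
  zero_mem' := by
    intro H hH φ h0 hker
    simp
  smul_mem' := by
    intro c a ha H hH φ h0 hker
    simpa using Ideal.mul_mem_left _ c (ha H hH φ h0 hker)

/-- A derivation of `K[x_1,…,x_n]` is homogeneous of (polynomial) degree `d` if it
sends each variable to a homogeneous polynomial of degree `d`. -/
def derivHomog {n : ℕ}
    (θ : Derivation K (MvPolynomial (Fin n) K) (MvPolynomial (Fin n) K)) (d : ℕ) :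
    Prop :=
  ∀ i, (θ (MvPolynomial.X i)).IsHomogeneous d

/-- Freeness of a multiarrangement `(B, m)` in `K^n` with exponents `d`: `D(B,m)` has a
homogeneous basis of degrees `d 0, …, d (n-1)`. -/
def multiFreeExp {n : ℕ} (B : Finset (Submodule K (Fin n → K)))
    (m : Submodule K (Fin n → K) → ℕ) (d : Fin n → ℕ) : Prop :=
  ∃ b : Basis (Fin n) (MvPolynomial (Fin n) K) ↥(arrDeriv B m),
    ∀ i, derivHomog
      ((b i : Derivation K (MvPolynomial (Fin n) K) (MvPolynomial (Fin n) K))) (d i)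

/-- Freeness of a multiarrangement in `K^n`. -/
def multiFree {n : ℕ} (B : Finset (Submodule K (Fin n → K)))
    (m : Submodule K (Fin n → K) → ℕ) : Prop :=
  ∃ d, multiFreeExp B m d

/-- Freeness of a simple central arrangement `A` in `K^n`: freeness of `(A, m ≡ 1)`. -/
def arrFree {n : ℕ} (A : Finset (Submodule K (Fin n → K))) : Prop :=
  multiFree A (fun _ => 1)

/-- The Ziegler restriction `(A^{H0}, m^{H0})` is free with exponents `d`: for every
linear identification `e : H0 ≅ K^{ℓ-1}`, the transported multiarrangement (with the
transported Ziegler multiplicity) is free with exponents `d`. -/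
def zieglerFreeExp {ℓ : ℕ} (A : Finset (Submodule K (Fin ℓ → K)))
    (H0 : Submodule K (Fin ℓ → K)) (d : Fin (ℓ - 1) → ℕ) : Prop :=
  ∀ e : ↥H0 ≃ₗ[K] (Fin (ℓ - 1) → K),
    multiFreeExp
      ((zieglerArr A H0).image
        (fun Y => (Y.comap H0.subtype).map (e : ↥H0 →ₗ[K] (Fin (ℓ - 1) → K))))
      (fun Z => zieglerMult A H0
        ((Z.comap (e : ↥H0 →ₗ[K] (Fin (ℓ - 1) → K))).map H0.subtype))
      d

/-- Freeness of the Ziegler restriction `(A^{H0}, m^{H0})`. -/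
def zieglerFree {ℓ : ℕ} (A : Finset (Submodule K (Fin ℓ → K)))
    (H0 : Submodule K (Fin ℓ → K)) : Prop :=
  ∃ d, zieglerFreeExp A H0 d

/-- The exponent vector `(a, b, 0, …, 0)`. -/
def expVec {n : ℕ} (ab : ℕ × ℕ) : Fin n → ℕ :=
  fun i => if (i : ℕ) = 0 then ab.1 else if (i : ℕ) = 1 then ab.2 else 0


lemma posetMobius_filter {α : Type*} [PartialOrder α] :
    ∀ (n : ℕ) (L : Finset α) (X Y : α), X ≤ Y →
      (L.filter (fun z => Y < z)).card ≤ n →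
      posetMobius (L.filter (fun z => X ≤ z)) Y = posetMobius L Y := by
  intro n
  induction n with
  | zero =>
    intro L X Y hXY hcard
    have hset : (L.filter (fun z => X ≤ z)).filter (fun z => Y < z)
        = L.filter (fun z => Y < z) := by
      ext z
      simp only [Finset.mem_filter]
      exact ⟨fun h => ⟨h.1.1, h.2⟩, fun h => ⟨⟨h.1, hXY.trans h.2.le⟩, h.2⟩⟩
    have hempty : L.filter (fun z => Y < z) = ∅ :=
      Finset.card_eq_zero.mp (Nat.le_zero.mp hcard)
    rw [posetMobius, posetMobius, hset, hempty]
    simp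
  | succ n ih =>
    intro n0 X Y hXY hcard
    have hset : (n0.filter (fun z => X ≤ z)).filter (fun z => Y < z)
        = n0.filter (fun z => Y < z) := by
      ext z
      simp only [Finset.mem_filter]
      exact ⟨fun h => ⟨h.1.1, h.2⟩, fun h => ⟨⟨h.1, hXY.trans h.2.le⟩, h.2⟩⟩
    rw [posetMobius, posetMobius]
    simp only [Finset.sum_attach, hset]
    split_ifs with h
    · congr 1
      apply Finset.sum_congr rfl
      intro y hy
      simp only [Finset.mem_filter] at hy
      apply ih n0 X y (hXY.trans hy.2.le)
      have hlt : (n0.filter (fun z => y < z)).card < (n0.filter (fun z => Y < z)).card := by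
        apply Finset.card_lt_card
        constructor
        · intro z hz
          simp only [Finset.mem_filter] at hz ⊢
          exact ⟨hz.1, lt_trans hy.2 hz.2⟩
        · intro hsub
          have := hsub (Finset.mem_filter.2 ⟨hy.1, hy.2⟩)
          simp only [Finset.mem_filter] at this
          exact lt_irrefl _ this.2
      omega
    · rfl

lemma aLFinset_loc {K V : Type*} [Field K] [AddCommGroup V] [Module K V]
    (A : Finset (AffineSubspace K V)) (X : AffineSubspace K V)
    (hX : X ∈ aLFinset (⊤ : AffineSubspace K V) A) :
    aLFinset (⊤ : AffineSubspace K V) (A.filter (fun H => X ≤ H)) =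
      (aLFinset (⊤ : AffineSubspace K V) A).filter (fun Y => X ≤ Y) := by
  ext Y
  simp only [aLFinset, Finset.mem_filter, Finset.mem_image, Finset.mem_powerset]
  constructor
  · rintro ⟨⟨s, hs, rfl⟩, hne⟩
    refine ⟨⟨⟨s, fun H hH => (Finset.mem_filter.mp (hs hH)).1, rfl⟩, hne⟩, ?_⟩
    exact le_inf (Finset.le_inf fun H hH => (Finset.mem_filter.mp (hs hH)).2) le_top
  · rintro ⟨⟨⟨s, hs, rfl⟩, hne⟩, hXY⟩
    refine ⟨⟨A.filter (fun H => s.inf id ⊓ ⊤ ≤ H), ?_, ?_⟩, hne⟩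
    · intro H hH
      simp only [Finset.mem_filter] at hH ⊢
      exact ⟨hH.1, hXY.trans hH.2⟩
    · apply le_antisymm
      · refine inf_le_inf_right _ (Finset.inf_mono ?_)
        intro H hH
        simp only [Finset.mem_filter]
        exact ⟨hs hH, inf_le_left.trans (Finset.inf_le hH)⟩
      · exact le_inf (Finset.le_inf fun H hH => (Finset.mem_filter.mp hH).2) le_top

/-- local-global formula for Betti numbers. For a finite affine
arrangement `A` in the `ℓ`-dimensional affine space `K^ℓ`, for every `k`:
`b_k(A) = ∑_{X ∈ L_k(A)} b_k(A_X)`. -/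
theorem betti_local_global
    {K : Type*} [Field K] (ℓ : ℕ)
    (A : Finset (AffineSubspace K (Fin ℓ → K))) (hA : ∀ H ∈ A, IsAffHyp H) (k : ℕ) :
    aBetti (⊤ : AffineSubspace K (Fin ℓ → K)) A k =
      ∑ X ∈ (aLFinset (⊤ : AffineSubspace K (Fin ℓ → K)) A).filter
          (fun X => finrank K (⊤ : AffineSubspace K (Fin ℓ → K)).direction -
            finrank K X.direction = k),
        aBetti (⊤ : AffineSubspace K (Fin ℓ → K)) (A.filter (fun H => X ≤ H)) k := by
  classical
  set L := aLFinset (⊤ : AffineSubspace K (Fin ℓ → K)) A with hL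
  have htop : finrank K (⊤ : AffineSubspace K (Fin ℓ → K)).direction = ℓ := by
    rw [AffineSubspace.direction_top]
    simp [Module.finrank_fintype_fun_eq_card]
  rw [aBetti, Finset.mul_sum]
  apply Finset.sum_congr rfl
  intro X hX
  simp only [Finset.mem_filter] at hX
  rw [aBetti, aLFinset_loc A X hX.1]
  have hXne : (X : Set (Fin ℓ → K)).Nonempty := by
    have h1 := hX.1
    rw [aLFinset, Finset.mem_filter] at h1
    exact h1.2
  have hsingle : (L.filter (fun Y => X ≤ Y)).filter
      (fun Y => finrank K (⊤ : AffineSubspace K (Fin ℓ → K)).direction -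
        finrank K Y.direction = k) = {X} := by
    ext Y
    simp only [Finset.mem_filter, Finset.mem_singleton]
    constructor
    · rintro ⟨⟨hYL, hXY⟩, hcod⟩
      have hdirle : X.direction ≤ Y.direction := AffineSubspace.direction_le hXY
      have hXr : finrank K X.direction ≤ ℓ := by
        simpa [Module.finrank_fintype_fun_eq_card] using Submodule.finrank_le X.direction
      have hYr : finrank K Y.direction ≤ ℓ := by
        simpa [Module.finrank_fintype_fun_eq_card] using Submodule.finrank_le Y.direction
      have hXc := hX.2
      rw [htop] at hXc hcod
      have hrk : finrank K Y.direction ≤ finrank K X.direction := by omega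
      have hdir : X.direction = Y.direction :=
        Submodule.eq_of_le_of_finrank_le hdirle hrk
      obtain ⟨p, hp⟩ := hXne
      symm
      exact AffineSubspace.ext_of_direction_eq hdir ⟨p, hp, hXY hp⟩
    · intro h
      rw [h]
      exact ⟨⟨hX.1, le_rfl⟩, hX.2⟩
  rw [hsingle, Finset.sum_singleton]
  rw [posetMobius_filter (L.filter (fun z => X < z)).card L X X (le_refl X) (le_refl _)]


end ArrPaper
end
end

section
/- Let A be a central hyperplane arrangement in V = K^ℓ and H0 ∈ A. Then for every k, L_k(d_{H0}A) is the disjoint union of the fibers ρ^{-1}(X) over X ∈ L_k(A^{H0}), and consequently b_k(d_{H0}A) = Σ_{X ∈ L_k(A^{H0})} b_k(d_{H0}(A_X)), where for X ∈ L_k(A^{H0}) ⊆ L_{k+1}(A), d_{H0}(A_X) denotes the deconing with respect to H0 of the central arrangement A_X = {H ∈ A : H ⊇ X}. -/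
/- Common definitions: hyperplane arrangements, intersection lattices, Möbius
functions, Betti numbers, characteristic polynomials, deconing, Ziegler
restriction, and freeness of (multi)arrangements. -/

open Module

noncomputable section
namespace ArrPaper

open scoped Classical

variable {K V : Type*} [Field K] [AddCommGroup V] [Module K V]

lemma finset_inf_inf {α L : Type*} [SemilatticeInf L] [OrderTop L]
    (T : Finset α) (f : α → L) (c : L) :
    T.inf (fun a => f a ⊓ c) ⊓ c = T.inf f ⊓ c := by
  refine le_antisymm (le_inf (Finset.le_inf fun b hb => ?_) inf_le_right)
    (le_inf (Finset.le_inf fun b hb => ?_) inf_le_right)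
  · exact le_trans inf_le_left (le_trans (Finset.inf_le hb) inf_le_left)
  · exact le_inf (le_trans inf_le_left (Finset.inf_le hb)) inf_le_right


lemma toAffine_inf (S T : Submodule K V) :
    (S ⊓ T).toAffineSubspace = S.toAffineSubspace ⊓ T.toAffineSubspace := by
  ext x
  simp [Submodule.mem_toAffineSubspace, AffineSubspace.mem_inf_iff, Submodule.mem_inf]

lemma toAffine_top : ((⊤ : Submodule K V)).toAffineSubspace = ⊤ := by
  ext x
  simp [Submodule.mem_toAffineSubspace]

lemma finset_inf_toAffine {α : Type*} (T : Finset α) (f : α → Submodule K V) :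
    T.inf (fun a => (f a).toAffineSubspace) = (T.inf f).toAffineSubspace := by
  induction T using Finset.induction_on with
  | empty => simp [toAffine_top]
  | insert _ _ h ih => rw [Finset.inf_insert, Finset.inf_insert, ih, toAffine_inf]

lemma toAffine_mono {S T : Submodule K V} (h : S ≤ T) :
    S.toAffineSubspace ≤ T.toAffineSubspace := by
  intro x hx
  simp only [SetLike.mem_coe, Submodule.mem_toAffineSubspace] at *
  exact h hx


lemma mem_levelOne {φ : V →ₗ[K] K} {v : V} : v ∈ levelOne φ ↔ φ v = 1 := Iff.rfl

lemma levelOne_nonempty {φ : V →ₗ[K] K} (hφ : φ ≠ 0) :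
    ((levelOne φ : AffineSubspace K V) : Set V).Nonempty := by
  obtain ⟨w, hw⟩ : ∃ w, φ w ≠ 0 := by
    by_contra h
    push_neg at h
    exact hφ (LinearMap.ext fun v => by simp [h v])
  exact ⟨(φ w)⁻¹ • w, by simp [SetLike.mem_coe, mem_levelOne, inv_mul_cancel₀ hw]⟩

lemma direction_levelOne {φ : V →ₗ[K] K} (hφ : φ ≠ 0) :
    (levelOne φ).direction = LinearMap.ker φ := by
  obtain ⟨p, hp⟩ := levelOne_nonempty (K := K) hφ
  have hp' : φ p = 1 := hp
  apply le_antisymm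
  · intro v hv
    rw [AffineSubspace.mem_direction_iff_eq_vsub (levelOne_nonempty hφ)] at hv
    obtain ⟨a, ha, b, hb, rfl⟩ := hv
    have ha' : φ a = 1 := ha
    have hb' : φ b = 1 := hb
    simp [LinearMap.mem_ker, vsub_eq_sub, map_sub, ha', hb']
  · intro v hv
    have hv' : φ v = 0 := hv
    have h1 : v + p ∈ levelOne φ := by
      rw [mem_levelOne, map_add, hv', hp', zero_add]
    have : v = (v + p) -ᵥ p := by simp [vsub_eq_sub]
    rw [this]
    exact AffineSubspace.vsub_mem_direction h1 hp

lemma rho_eq_direction {φ : V →ₗ[K] K} (hφ : φ ≠ 0) {Y : AffineSubspace K V}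
    (hY : (Y : Set V).Nonempty) (hle : Y ≤ levelOne φ) :
    Submodule.span K (Y : Set V) ⊓ LinearMap.ker φ = Y.direction := by
  obtain ⟨p, hp⟩ := hY
  have hp' : φ p = 1 := hle hp
  have hdir : Y.direction ≤ LinearMap.ker φ := by
    rw [← direction_levelOne hφ]
    exact AffineSubspace.direction_le hle
  apply le_antisymm
  · have hspan : Submodule.span K (Y : Set V) ≤ (K ∙ p) ⊔ Y.direction := by
      rw [Submodule.span_le]
      intro y hy
      have h1 : y - p ∈ Y.direction := AffineSubspace.vsub_mem_direction hy hp
      have : y = p + (y - p) := by abel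
      rw [SetLike.mem_coe, this]
      exact Submodule.add_mem_sup (Submodule.mem_span_singleton_self p) h1
    intro x hx
    obtain ⟨hx1, hx2⟩ := Submodule.mem_inf.mp hx
    obtain ⟨a, ha, b, hb, rfl⟩ := Submodule.mem_sup.mp (hspan hx1)
    obtain ⟨c, rfl⟩ := Submodule.mem_span_singleton.mp ha
    have hb0 : φ b = 0 := hdir hb
    have : φ (c • p + b) = c := by simp [map_add, map_smul, hp', hb0]
    have hc : c = 0 := by
      rw [← this]
      exact hx2
    rw [hc, zero_smul, zero_add]
    exact hb
  · intro v hv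
    rw [AffineSubspace.mem_direction_iff_eq_vsub ⟨p, hp⟩] at hv
    obtain ⟨a, ha, b, hb, rfl⟩ := hv
    refine Submodule.mem_inf.mpr ⟨?_, hdir ?_⟩
    · exact sub_mem (Submodule.subset_span ha) (Submodule.subset_span hb)
    · rw [AffineSubspace.mem_direction_iff_eq_vsub ⟨p, hp⟩]
      exact ⟨a, ha, b, hb, rfl⟩

lemma mem_aLFinset_deconing {B : Finset (Submodule K V)} {H0 : Submodule K V}
    {φ : V →ₗ[K] K} {Y : AffineSubspace K V} :
    Y ∈ aLFinset (levelOne φ) (deconing B H0 φ) ↔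
      ((Y : Set V).Nonempty ∧
        ∃ T ⊆ B.erase H0, Y = (T.inf id).toAffineSubspace ⊓ levelOne φ) := by
  unfold aLFinset deconing
  rw [Finset.mem_filter, and_comm]
  apply and_congr_right
  intro _
  rw [Finset.mem_image]
  constructor
  · rintro ⟨s, hs, rfl⟩
    rw [Finset.mem_powerset] at hs
    obtain ⟨T, hT, rfl⟩ := Finset.subset_image_iff.mp hs
    refine ⟨T, hT, ?_⟩
    rw [Finset.inf_image]
    have : (id ∘ fun H : Submodule K V => H.toAffineSubspace ⊓ levelOne φ) =
        (fun H : Submodule K V => H.toAffineSubspace ⊓ levelOne φ) := rfl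
    rw [this, finset_inf_inf, finset_inf_toAffine]
    rfl
  · rintro ⟨T, hT, rfl⟩
    refine ⟨T.image (fun H => H.toAffineSubspace ⊓ levelOne φ),
      Finset.mem_powerset.mpr (Finset.image_subset_image hT), ?_⟩
    rw [Finset.inf_image]
    have : (id ∘ fun H : Submodule K V => H.toAffineSubspace ⊓ levelOne φ) =
        (fun H : Submodule K V => H.toAffineSubspace ⊓ levelOne φ) := rfl
    rw [this, finset_inf_inf, finset_inf_toAffine]
    rfl

lemma mem_LFinsetIn_ziegler {A : Finset (Submodule K V)} {H0 : Submodule K V}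
    {X : Submodule K V} :
    X ∈ LFinsetIn H0 (zieglerArr A H0) ↔ ∃ T ⊆ A.erase H0, X = T.inf id ⊓ H0 := by
  unfold LFinsetIn zieglerArr
  rw [Finset.mem_image]
  constructor
  · rintro ⟨s, hs, rfl⟩
    rw [Finset.mem_powerset] at hs
    obtain ⟨T, hT, rfl⟩ := Finset.subset_image_iff.mp hs
    refine ⟨T, hT, ?_⟩
    rw [Finset.inf_image]
    have : (id ∘ fun H : Submodule K V => H ⊓ H0) =
        (fun H : Submodule K V => H ⊓ H0) := rfl
    rw [this, finset_inf_inf]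
    rfl
  · rintro ⟨T, hT, rfl⟩
    refine ⟨T.image (fun H => H ⊓ H0),
      Finset.mem_powerset.mpr (Finset.image_subset_image hT), ?_⟩
    rw [Finset.inf_image]
    have : (id ∘ fun H : Submodule K V => H ⊓ H0) =
        (fun H : Submodule K V => H ⊓ H0) := rfl
    rw [this, finset_inf_inf]
    rfl

lemma direction_deconed {T : Finset (Submodule K V)} {φ : V →ₗ[K] K}
    (hne : ((((T.inf id).toAffineSubspace ⊓ levelOne φ : AffineSubspace K V)) : Set V).Nonempty) :
    ((T.inf id).toAffineSubspace ⊓ levelOne φ).direction = T.inf id ⊓ LinearMap.ker φ := by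
  obtain ⟨p, hp⟩ := hne
  rw [SetLike.mem_coe, AffineSubspace.mem_inf_iff] at hp
  rw [AffineSubspace.direction_inf_of_mem hp.1 hp.2, Submodule.toAffineSubspace_direction]
  congr 1
  have hφ : φ ≠ 0 := by
    intro h
    have := hp.2
    rw [mem_levelOne, h] at this
    simp at this
  exact direction_levelOne hφ

lemma mem_loc_iff {A : Finset (Submodule K V)} {H0 X : Submodule K V} {φ : V →ₗ[K] K}
    (hker : LinearMap.ker φ = H0) (hX0 : X ≤ H0) {Y : AffineSubspace K V} :
    Y ∈ aLFinset (levelOne φ) (deconing (locArr A X) H0 φ) ↔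
      (Y ∈ aLFinset (levelOne φ) (deconing A H0 φ) ∧ X ≤ Y.direction) := by
  constructor
  · intro h
    obtain ⟨hne, T, hT, rfl⟩ := mem_aLFinset_deconing.mp h
    have hTA : T ⊆ A.erase H0 := by
      intro H hH
      have h1 := Finset.mem_erase.mp (hT hH)
      exact Finset.mem_erase.mpr ⟨h1.1, (Finset.mem_filter.mp h1.2).1⟩
    refine ⟨mem_aLFinset_deconing.mpr ⟨hne, T, hTA, rfl⟩, ?_⟩
    rw [direction_deconed hne, hker]
    refine le_inf (Finset.le_inf fun H hH => ?_) hX0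
    exact (Finset.mem_filter.mp (Finset.mem_of_mem_erase (hT hH))).2
  · rintro ⟨h, hX⟩
    obtain ⟨hne, T, hT, rfl⟩ := mem_aLFinset_deconing.mp h
    rw [direction_deconed hne] at hX
    refine mem_aLFinset_deconing.mpr ⟨hne, T, ?_, rfl⟩
    intro H hH
    have h1 := Finset.mem_erase.mp (hT hH)
    refine Finset.mem_erase.mpr ⟨h1.1, Finset.mem_filter.mpr ⟨h1.2, ?_⟩⟩
    exact le_trans hX (le_trans inf_le_left (Finset.inf_le (f := id) hH))

lemma posetMobius_congr {α : Type*} [PartialOrder α] :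
    ∀ (n : ℕ) (L L' : Finset α) (x : α),
      (L.filter (fun z => x < z)).card ≤ n →
      (∀ y, x ≤ y → L.filter (fun z => y < z) = L'.filter (fun z => y < z)) →
      posetMobius L x = posetMobius L' x := by
  intro n
  induction n with
  | zero =>
    intro L L' x hc h
    rw [posetMobius, posetMobius, ← h x le_rfl]
    have hemp : ¬ (L.filter (fun z => x < z)).Nonempty := by
      rw [Finset.nonempty_iff_ne_empty]
      simp only [ne_eq, not_not]
      exact Finset.card_eq_zero.mp (Nat.le_zero.mp hc)
    simp [hemp]
  | succ n ih =>
    intro L L' x hc h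
    rw [posetMobius, posetMobius, ← h x le_rfl]
    by_cases hne : (L.filter (fun z => x < z)).Nonempty
    · simp only [if_pos hne]
      congr 1
      apply Finset.sum_congr rfl
      intro y _
      have hy' := Finset.mem_filter.mp y.2
      apply ih
      · have hssub : L.filter (fun z => (y : α) < z) ⊂ L.filter (fun z => x < z) := by
          constructor
          · intro z hz
            have hz' := Finset.mem_filter.mp hz
            exact Finset.mem_filter.mpr ⟨hz'.1, lt_trans hy'.2 hz'.2⟩
          · intro hsub
            have := Finset.mem_filter.mp (hsub (Finset.mem_filter.mpr ⟨hy'.1, hy'.2⟩))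
            exact lt_irrefl _ this.2
        exact Nat.lt_succ_iff.mp (lt_of_lt_of_le (Finset.card_lt_card hssub) hc)
      · intro z hz
        exact h z (le_trans (le_of_lt hy'.2) hz)
    · simp [hne]

/-- `L_k(d_{H0}A)` is the disjoint union of the fibers `ρ⁻¹(X)`,
`X ∈ L_k(A^{H0})`; consequently `b_k(d_{H0}A) = ∑_{X ∈ L_k(A^{H0})} b_k(d_{H0}(A_X))`. -/
theorem betti_deconing_eq_sum_fibers
    {K : Type*} [Field K] (ℓ : ℕ)
    (A : Finset (Submodule K (Fin ℓ → K))) (hA : ∀ H ∈ A, IsLinHyp H)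
    (H0 : Submodule K (Fin ℓ → K)) (hH0 : H0 ∈ A)
    (φ : (Fin ℓ → K) →ₗ[K] K) (hφ : φ ≠ 0) (hker : LinearMap.ker φ = H0) (k : ℕ) :
    ((aLFinset (levelOne φ) (deconing A H0 φ)).filter
        (fun Y => finrank K (levelOne φ).direction - finrank K Y.direction = k) =
      (restL A H0 k).biUnion
        (fun X => (aLFinset (levelOne φ) (deconing A H0 φ)).filter
          (fun Y => (finrank K (levelOne φ).direction - finrank K Y.direction = k) ∧
            rhoMap H0 Y = X))) ∧
    aBetti (levelOne φ) (deconing A H0 φ) k =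
      ∑ X ∈ restL A H0 k, aBetti (levelOne φ) (deconing (locArr A X) H0 φ) k := by
  have hEd : (levelOne φ).direction = H0 := by
    rw [direction_levelOne hφ, hker]
  -- rhoMap equals direction for elements of the deconed lattice
  have hrho : ∀ {Y : AffineSubspace K (Fin ℓ → K)},
      Y ∈ aLFinset (levelOne φ) (deconing A H0 φ) → rhoMap H0 Y = Y.direction := by
    intro Y hY
    obtain ⟨hne, T, hT, hYeq⟩ := mem_aLFinset_deconing.mp hY
    have hYle : Y ≤ levelOne φ := by rw [hYeq]; exact inf_le_right
    rw [rhoMap, ← hker, rho_eq_direction hφ hne hYle]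
  have hpart : (aLFinset (levelOne φ) (deconing A H0 φ)).filter
        (fun Y => finrank K (levelOne φ).direction - finrank K Y.direction = k) =
      (restL A H0 k).biUnion
        (fun X => (aLFinset (levelOne φ) (deconing A H0 φ)).filter
          (fun Y => (finrank K (levelOne φ).direction - finrank K Y.direction = k) ∧
            rhoMap H0 Y = X)) := by
    apply Finset.ext
    intro Y
    simp only [Finset.mem_filter, Finset.mem_biUnion]
    constructor
    · rintro ⟨hYL, hcod⟩
      obtain ⟨hne, T, hT, hYeq⟩ := mem_aLFinset_deconing.mp hYL
      have hdir : Y.direction = T.inf id ⊓ H0 := by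
        rw [hYeq, direction_deconed (hYeq ▸ hne), hker]
      refine ⟨Y.direction, ?_, hYL, hcod, hrho hYL⟩
      rw [restL, Finset.mem_filter]
      refine ⟨mem_LFinsetIn_ziegler.mpr ⟨T, hT, hdir⟩, ?_⟩
      rw [← hEd]
      exact hcod
    · rintro ⟨X, _, hYmem, hcod, _⟩
      exact ⟨hYmem, hcod⟩
  refine ⟨hpart, ?_⟩
  -- fibers are pairwise disjoint
  have hdisj : Set.PairwiseDisjoint ↑(restL A H0 k)
      (fun X => (aLFinset (levelOne φ) (deconing A H0 φ)).filter
          (fun Y => (finrank K (levelOne φ).direction - finrank K Y.direction = k) ∧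
            rhoMap H0 Y = X)) := by
    intro X1 _ X2 _ hne12
    apply Finset.disjoint_left.mpr
    intro Y hY1 hY2
    have e1 := (Finset.mem_filter.mp hY1).2.2
    have e2 := (Finset.mem_filter.mp hY2).2.2
    exact hne12 (e1.symm.trans e2)
  conv_lhs => rw [aBetti]
  rw [hpart, Finset.sum_biUnion hdisj, Finset.mul_sum]
  apply Finset.sum_congr rfl
  intro X hX
  have hXmem := Finset.mem_filter.mp hX
  obtain ⟨TX, hTX, hXeq⟩ := mem_LFinsetIn_ziegler.mp hXmem.1
  have hXH0 : X ≤ H0 := by rw [hXeq]; exact inf_le_right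
  have hcodX : finrank K ↥H0 - finrank K ↥X = k := hXmem.2
  -- fiber over X equals the codim-k part of the lattice of the deconed localization
  have hfib : (aLFinset (levelOne φ) (deconing A H0 φ)).filter
        (fun Y => (finrank K (levelOne φ).direction - finrank K Y.direction = k) ∧
          rhoMap H0 Y = X) =
      (aLFinset (levelOne φ) (deconing (locArr A X) H0 φ)).filter
        (fun Y => finrank K (levelOne φ).direction - finrank K Y.direction = k) := by
    apply Finset.ext
    intro Y
    simp only [Finset.mem_filter]
    constructor
    · rintro ⟨hYL, hcod, hrhoY⟩
      refine ⟨(mem_loc_iff hker hXH0).mpr ⟨hYL, ?_⟩, hcod⟩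
      rw [← hrhoY, hrho hYL]
    · rintro ⟨hYL', hcod⟩
      obtain ⟨hYL, hXY⟩ := (mem_loc_iff hker hXH0).mp hYL'
      obtain ⟨hne, T, hT, hYeq⟩ := mem_aLFinset_deconing.mp hYL
      have hYdH0 : Y.direction ≤ H0 := by
        rw [← hEd]
        exact AffineSubspace.direction_le (by rw [hYeq]; exact inf_le_right)
      have hfr1 : finrank K ↥X ≤ finrank K ↥(Y.direction) := Submodule.finrank_mono hXY
      have hfr2 : finrank K ↥(Y.direction) ≤ finrank K ↥H0 := Submodule.finrank_mono hYdH0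
      have hfr3 : finrank K ↥X ≤ finrank K ↥H0 := le_trans hfr1 hfr2
      have hcod' : finrank K ↥H0 - finrank K ↥(Y.direction) = k := by
        rw [← hEd]; exact hcod
      have hfr : finrank K ↥X = finrank K ↥(Y.direction) := by omega
      have hXeqd : X = Y.direction := Submodule.eq_of_le_of_finrank_eq hXY hfr
      exact ⟨hYL, hcod, by rw [hrho hYL, hXeqd]⟩
  rw [aBetti, hfib]
  congr 1
  apply Finset.sum_congr rfl
  intro Y hY
  obtain ⟨hYL', _⟩ := Finset.mem_filter.mp hY
  obtain ⟨hYL, hXY⟩ := (mem_loc_iff hker hXH0).mp hYL'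
  apply posetMobius_congr ((aLFinset (levelOne φ) (deconing A H0 φ)).filter
      (fun z => Y < z)).card _ _ _ le_rfl
  intro Z hZ
  apply Finset.ext
  intro W
  simp only [Finset.mem_filter]
  constructor
  · rintro ⟨hWL, hZW⟩
    have hYW : Y ≤ W := le_trans hZ (le_of_lt hZW)
    have hXW : X ≤ W.direction := le_trans hXY (AffineSubspace.direction_le hYW)
    exact ⟨(mem_loc_iff hker hXH0).mpr ⟨hWL, hXW⟩, hZW⟩
  · rintro ⟨hWL', hZW⟩
    exact ⟨((mem_loc_iff hker hXH0).mp hWL').1, hZW⟩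

end ArrPaper
end
end
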